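/- Let Γ ∈ ℂ and a ∈ ℂ with Re a > 0, and define Ω_ℓ(α) = Γ e^{-aα} for α ≥ 0. Suppose Kᵈⁿ(x,z) and K̄ᵈⁿ(x,y) are as in the one-soliton closed form: Kᵈⁿ(x,z) = -(|Γ|²/(2η)) e^{-a*(x+z) - 2ax}/(1 + e^{2(x₀ - 2ηx)}) and K̄ᵈⁿ(x,y) = -(Kᵘᵖ(x,y))* with Kᵘᵖ(x,y) = Γ* e^{-a*(x+y)}/(1 + e^{2(x₀-2ηx)}), where a = η + iξ, η > 0, Γ = 2iη e^{x₀ - iφ}. Then for all y ≥ x, Ω_ℓ(x+y) + ∫_x^∞ Kᵈⁿ(x,z) Ω_ℓ(z+y) dz = -K̄ᵈⁿ(x,y). -/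

import Mathlib

open MeasureTheory Complex

lemma integral_exp_neg_mul_Ioi {b : ℝ} (hb : 0 < b) (x : ℝ) :
    (∫ z in Set.Ioi x, Real.exp (-b * z)) = Real.exp (-b * x) / b := by
  have := MeasureTheory.integral_Ioi_of_hasDerivAt_of_tendsto
    (f := fun z => -Real.exp (-b * z) / b) (f' := fun z => Real.exp (-b * z)) (a := x) (m := 0)
    ?_ ?_ ((exp_neg_integrableOn_Ioi x hb)) ?_
  · rw [this]; ring
  · exact Continuous.continuousWithinAt (by fun_prop)
  · intro z _
    simpa [hb.ne'] using (((hasDerivAt_id z).const_mul (-b)).exp.neg.div_const b)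
  · have : Filter.Tendsto (fun z => -Real.exp (-b * z) / b) Filter.atTop (nhds (-0 / b)) := by
      refine Filter.Tendsto.div_const (Filter.Tendsto.neg ?_) _
      exact Real.tendsto_exp_atBot.comp (Filter.tendsto_id.const_mul_atTop_of_neg (by linarith))
    simpa using this

theorem one_soliton_marchenko_equation (η ξ φ x₀ : ℝ) (hη : 0 < η)
    (a Γ : ℂ) (ha : a = (η : ℂ) + Complex.I * (ξ : ℂ))
    (hΓ : Γ = 2 * Complex.I * (η : ℂ) * Complex.exp ((x₀ : ℂ) - Complex.I * (φ : ℂ)))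
    (Ω : ℝ → ℂ) (hΩ : ∀ α : ℝ, Ω α = Γ * Complex.exp (-a * (α : ℂ)))
    (Kup Kdn Kbardn : ℝ → ℝ → ℂ)
    (hKup : ∀ x y : ℝ, Kup x y =
      (starRingEnd ℂ) Γ * Complex.exp (-(starRingEnd ℂ) a * ((x + y : ℝ) : ℂ)) /
        (1 + ((Real.exp (2 * (x₀ - 2 * η * x)) : ℝ) : ℂ)))
    (hKdn : ∀ x y : ℝ, Kdn x y =
      -((‖Γ‖ ^ 2 / (2 * η) : ℝ) : ℂ) *
        Complex.exp (-(starRingEnd ℂ) a * ((x + y : ℝ) : ℂ) - 2 * a * (x : ℂ)) /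
        (1 + ((Real.exp (2 * (x₀ - 2 * η * x)) : ℝ) : ℂ)))
    (hKbardn : ∀ x y : ℝ, Kbardn x y = -(starRingEnd ℂ) (Kup x y)) :
    ∀ x y : ℝ, x ≤ y →
      Ω (x + y) + (∫ z in Set.Ioi x, Kdn x z * Ω (z + y)) = -Kbardn x y := by
  intro x y _
  have hsum : a + (starRingEnd ℂ) a = 2 * η := by
    rw [ha]; simp [Complex.ext_iff]; ring
  have hD : (1 + ((Real.exp (2 * (x₀ - 2 * η * x)) : ℝ) : ℂ)) ≠ 0 := by
    have : (0:ℝ) < 1 + Real.exp (2 * (x₀ - 2 * η * x)) := by positivity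
    exact_mod_cast Complex.ofReal_ne_zero.mpr this.ne'
  set D : ℂ := 1 + ((Real.exp (2 * (x₀ - 2 * η * x)) : ℝ) : ℂ) with hDdef
  set E : ℂ := -((‖Γ‖ ^ 2 / (2 * η) : ℝ) : ℂ) * Γ *
      Complex.exp (-(starRingEnd ℂ) a * (x:ℂ) - 2 * a * (x:ℂ) - a * (y:ℂ)) / D with hE
  have hpt : ∀ z : ℝ, Kdn x z * Ω (z + y) = E * ((Real.exp (-(2*η) * z) : ℝ) : ℂ) := by
    intro z
    rw [hKdn, hΩ, hE]
    have hzz : Complex.exp (-(starRingEnd ℂ) a * ((x + z : ℝ) : ℂ) - 2 * a * (x:ℂ)) *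
        Complex.exp (-a * ((z + y : ℝ) : ℂ)) =
        Complex.exp (-(starRingEnd ℂ) a * (x:ℂ) - 2 * a * (x:ℂ) - a * (y:ℂ)) *
        Complex.exp ((-(2*η) * z : ℝ) : ℂ) := by
      rw [← Complex.exp_add, ← Complex.exp_add]
      congr 1
      push_cast
      linear_combination (-(z:ℂ)) * hsum
    linear_combination (-((‖Γ‖ ^ 2 / (2 * η) : ℝ) : ℂ) * Γ / D) * hzz +
      (((‖Γ‖ ^ 2 / (2 * η) : ℝ) : ℂ) * Γ *
        Complex.exp (-(starRingEnd ℂ) a * (x:ℂ) - 2 * a * (x:ℂ) - a * (y:ℂ)) / D) *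
        (Complex.ofReal_exp (-(2*η) * z))
  have h2η : (0:ℝ) < 2 * η := by linarith
  have hint : (∫ z in Set.Ioi x, Kdn x z * Ω (z + y))
      = E * ((Real.exp (-(2*η) * x) / (2*η) : ℝ) : ℂ) := by
    simp_rw [hpt]
    rw [MeasureTheory.integral_const_mul]
    congr 1
    rw [show ((fun z : ℝ => ((Real.exp (-(2*η) * z) : ℝ) : ℂ))) = fun z : ℝ => ((Real.exp (-(2*η) * z) : ℝ) : ℂ) from rfl]
    rw [← integral_exp_neg_mul_Ioi h2η x]
    exact integral_ofReal
  rw [hint, hΩ, hKbardn, hKup, neg_neg]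
  have habs : (‖Γ‖ ^ 2 : ℝ) = 4 * η^2 * Real.exp (2 * x₀) := by
    have h1 : ‖Γ‖ = 2 * η * Real.exp x₀ := by
      rw [hΓ]; simp [Complex.norm_exp, abs_of_pos hη]
    rw [h1, two_mul x₀, Real.exp_add]; ring
  have hconjD : (starRingEnd ℂ) D = D := by
    rw [hDdef, map_add, map_one, Complex.conj_ofReal]
  rw [map_div₀, map_mul, hconjD, Complex.conj_conj, ← Complex.exp_conj, map_mul,
    map_neg, Complex.conj_conj, Complex.conj_ofReal]
  rw [hE, habs]
  have hη' : (η:ℂ) ≠ 0 := by exact_mod_cast hη.ne'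
  have b1 : Complex.exp (-a * ((x + y : ℝ) : ℂ)) =
      Complex.exp (-a * (x:ℂ)) * Complex.exp (-a * (y:ℂ)) := by
    rw [← Complex.exp_add]; congr 1; push_cast; ring
  have b2 : Complex.exp (-(starRingEnd ℂ) a * (x:ℂ) - 2 * a * (x:ℂ) - a * (y:ℂ)) =
      Complex.exp (-(starRingEnd ℂ) a * (x:ℂ)) * Complex.exp (-a * (x:ℂ)) ^ 2 *
        Complex.exp (-a * (y:ℂ)) := by
    rw [sq, ← Complex.exp_add, ← Complex.exp_add, ← Complex.exp_add]; congr 1; ring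
  have b3 : ((Real.exp (2 * (x₀ - 2 * η * x)) : ℝ) : ℂ) =
      Complex.exp ((x₀:ℂ)) ^ 2 *
        (Complex.exp (-a * (x:ℂ)) * Complex.exp (-(starRingEnd ℂ) a * (x:ℂ))) ^ 2 := by
    rw [Complex.ofReal_exp]
    rw [show Complex.exp ((x₀:ℂ)) ^ 2 *
        (Complex.exp (-a * (x:ℂ)) * Complex.exp (-(starRingEnd ℂ) a * (x:ℂ))) ^ 2 =
        Complex.exp (((x₀:ℂ) + (x₀:ℂ)) + ((-a * (x:ℂ) + -(starRingEnd ℂ) a * (x:ℂ)) +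
          (-a * (x:ℂ) + -(starRingEnd ℂ) a * (x:ℂ)))) from by
      simp only [Complex.exp_add]; ring]
    congr 1; push_cast
    linear_combination (2 * (x:ℂ)) * hsum
  have b4 : ((Real.exp (-(2*η) * x) : ℝ) : ℂ) =
      Complex.exp (-a * (x:ℂ)) * Complex.exp (-(starRingEnd ℂ) a * (x:ℂ)) := by
    rw [Complex.ofReal_exp, ← Complex.exp_add]
    congr 1; push_cast
    linear_combination ((x:ℂ)) * hsum
  have b5 : ((Real.exp (2 * x₀) : ℝ) : ℂ) = Complex.exp ((x₀:ℂ)) ^ 2 := by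
    rw [Complex.ofReal_exp, sq, ← Complex.exp_add]
    congr 1; push_cast; ring
  rw [hDdef, b3] at hD ⊢
  rw [Complex.ofReal_div, Complex.ofReal_div, Complex.ofReal_mul, b5, b4, b1, b2]
  push_cast
  ring_nf at hD ⊢
  field_simp [hD]
  ring
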